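/- For a prime p and u ≥ 0, let h ≥ 0 satisfy p^h − 1 ≤ u ≤ p^{h+1} − 2. Suppose Laurent polynomials P_i(s) ∈ ℤ_{≥0}[s^{±1}] for i ≥ 0 have nonnegative coefficients, P_i is supported on monomials s^j with j strictly between −u−p^{i+1}+2p^i−1 and −u+p^{i+1}−1, and (1+s^{−2})^u = Σ_{i≥0} P_i(s)·(1 + s^{−2} + s^{−4} + ⋯ + s^{−2p^i+2}). Then P_i = 0 for all i > h. -/

import Mathlib

open Finset

/-- **Vanishing of the high Poincaré polynomials** (Remark 6.3 of the paper).
Let `p` be a prime, `u ≥ 0`, and `h` with `p^h − 1 ≤ u ≤ p^{h+1} − 2`.  Suppose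
`f i : ℤ → ℕ` are the (nonnegative) coefficient functions of Laurent polynomials
`P_i(s) = Σ_j f i j · s^j`, each supported on exponents `j` with
`−u−p^{i+1}+2p^i−1 < j < −u+p^{i+1}−1`, and satisfying
`(1+s^{−2})^u = Σ_{i≥0} P_i(s)·(1+s^{−2}+⋯+s^{−2p^i+2})`, i.e. coefficientwise (in
`ℝ≥0∞`, so that the infinite sum makes sense):
for every `j`, the coefficient of `s^j` of `(1+s^{−2})^u` equals
`Σ_i Σ_{t<p^i} f i (j+2t)`.  Then `P_i = 0` for all `i > h`. -/
theorem statement11 (p u h : ℕ) (hp : p.Prime)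
    (h1 : p ^ h - 1 ≤ u) (h2 : u ≤ p ^ (h + 1) - 2)
    (f : ℕ → ℤ → ℕ)
    (hsupp : ∀ i : ℕ, ∀ j : ℤ, f i j ≠ 0 →
      -(u : ℤ) - (p : ℤ) ^ (i + 1) + 2 * (p : ℤ) ^ i - 1 < j ∧
        j < -(u : ℤ) + (p : ℤ) ^ (i + 1) - 1)
    (hid : ∀ j : ℤ,
      ((∑ m ∈ Finset.range (u + 1),
          if j = -(2 * (m : ℤ)) then u.choose m else 0 : ℕ) : ENNReal) =
        ∑' i : ℕ, ∑ t ∈ Finset.range (p ^ i), (f i (j + 2 * (t : ℤ)) : ENNReal)) :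
    ∀ i : ℕ, h < i → ∀ j : ℤ, f i j = 0 := by
  intro i hi j
  by_contra hfj
  have hp1 : 2 ≤ p := hp.two_le
  have hpiu : u + 2 ≤ p ^ i := by
    have hle : p ^ (h + 1) ≤ p ^ i := Nat.pow_le_pow_right hp.one_le hi
    have h2' : 2 ≤ p ^ (h + 1) := le_trans hp1 (Nat.le_self_pow (by omega) p)
    omega
  have hpi1 : 1 ≤ p ^ i := Nat.one_le_two_pow.trans (Nat.pow_le_pow_left hp1 i) |>.trans (le_refl _) |>.trans (le_refl _)
  have key : ∀ t : ℕ, t < p ^ i → ∃ m : ℕ, m ≤ u ∧ j - 2 * t = -(2 * (m : ℤ)) := by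
    intro t ht
    have hidj := hid (j - 2 * t)
    have hpos : (f i j : ENNReal) ≤
        ∑' i' : ℕ, ∑ t' ∈ Finset.range (p ^ i'), (f i' ((j - 2 * t) + 2 * (t' : ℤ)) : ENNReal) := by
      calc (f i j : ENNReal)
          = (f i ((j - 2 * t) + 2 * (t : ℤ)) : ENNReal) := by ring_nf
        _ ≤ ∑ t' ∈ Finset.range (p ^ i), (f i ((j - 2 * t) + 2 * (t' : ℤ)) : ENNReal) :=
            Finset.single_le_sum (f := fun t' : ℕ => (f i ((j - 2 * t) + 2 * (t' : ℤ)) : ENNReal))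
              (fun _ _ => zero_le) (Finset.mem_range.mpr ht)
        _ ≤ _ := ENNReal.le_tsum i
    rw [← hidj] at hpos
    have hne : (∑ m ∈ Finset.range (u + 1),
        if j - 2 * t = -(2 * (m : ℤ)) then u.choose m else 0) ≠ 0 := by
      intro h0
      rw [h0] at hpos
      simp only [Nat.cast_zero, le_zero_iff, Nat.cast_eq_zero] at hpos
      exact hfj hpos
    obtain ⟨m, hm, hm0⟩ := Finset.exists_ne_zero_of_sum_ne_zero hne
    rw [Finset.mem_range] at hm
    split_ifs at hm0 with hcond
    · exact ⟨m, by omega, hcond⟩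
    · simp at hm0
  obtain ⟨m0, hm0, he0⟩ := key 0 (by omega)
  obtain ⟨m1, hm1, he1⟩ := key (p ^ i - 1) (by omega)
  simp only [Nat.cast_zero] at he0
  have hc : ((p ^ i - 1 : ℕ) : ℤ) = ((p ^ i : ℕ) : ℤ) - 1 := by
    rw [Nat.cast_sub hpi1]; simp
  rw [hc] at he1
  have hcast : ((u : ℤ) + 2) ≤ ((p ^ i : ℕ) : ℤ) := by exact_mod_cast hpiu
  set q : ℤ := ((p ^ i : ℕ) : ℤ)
  omega
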